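/- Let H be a real Hilbert space and let A : H → H be Lipschitz continuous with constant L ≥ 0 and strongly monotone with constant c > 0. Let (V_k)_{k∈ℕ} be an increasing sequence of closed subspaces of H (V_k ⊆ V_{k+1}), and let V_∞ be the closure of their union. For each k, let u_k ∈ V_k satisfy ⟪A u_k, v⟫ = 0 for all v ∈ V_k, and let u_∞ ∈ V_∞ satisfy ⟪A u_∞, v⟫ = 0 for all v ∈ V_∞. Then ‖u_∞ − u_k‖ ≤ (L/c)·dist(u_∞, V_k) for every k, and consequently ‖u_∞ − u_k‖ → 0 as k → ∞. -/

import Mathlib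

/-- **Convergence of Galerkin solutions over an increasing family of subspaces
(abstract core of Lemma 5.3).** Let `H` be a real Hilbert space, `A : H → H` Lipschitz
with constant `L ≥ 0` and strongly monotone with constant `c > 0`. Let `(V_k)` be an
increasing sequence of closed subspaces, `V_∞` the closure of their union, `u_k ∈ V_k`
the Galerkin solutions and `u_∞ ∈ V_∞` the solution of the limit problem. Then
`‖u_∞ − u_k‖ ≤ (L/c)·dist(u_∞, V_k)` for every `k`, and `‖u_∞ − u_k‖ → 0`. -/
theorem galerkin_convergence_increasing_subspaces {H : Type*} [NormedAddCommGroup H]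
    [InnerProductSpace ℝ H] [CompleteSpace H]
    (A : H → H) (L : ℝ) (hL : 0 ≤ L)
    (hlip : ∀ u v : H, ‖A u - A v‖ ≤ L * ‖u - v‖)
    (c : ℝ) (hc : 0 < c)
    (hmono : ∀ u v : H, c * ‖u - v‖ ^ 2 ≤ (inner ℝ (A u - A v) (u - v) : ℝ))
    (V : ℕ → Submodule ℝ H) (hVclosed : ∀ k, IsClosed ((V k : Set H)))
    (hVmono : ∀ k, V k ≤ V (k + 1))
    (Vinf : Submodule ℝ H) (hVinf : (Vinf : Set H) = closure (⋃ k, (V k : Set H)))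
    (u : ℕ → H) (hu : ∀ k, u k ∈ V k)
    (hugal : ∀ k, ∀ v ∈ V k, (inner ℝ (A (u k)) v : ℝ) = 0)
    (uinf : H) (huinf : uinf ∈ Vinf)
    (huinfgal : ∀ v ∈ Vinf, (inner ℝ (A uinf) v : ℝ) = 0) :
    (∀ k, ‖uinf - u k‖ ≤ (L / c) * Metric.infDist uinf (V k : Set H)) ∧
    Filter.Tendsto (fun k => ‖uinf - u k‖) Filter.atTop (nhds 0) := by
  have hV : Monotone V := monotone_nat_of_le_succ hVmono
  have hVsub : ∀ k, (V k : Set H) ⊆ (Vinf : Set H) := by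
    intro k x hx
    rw [hVinf]
    exact subset_closure (Set.mem_iUnion.2 ⟨k, hx⟩)
  have hbound : ∀ k, ‖uinf - u k‖ ≤ (L / c) * Metric.infDist uinf (V k : Set H) := by
    intro k
    set d := uinf - u k with hd
    have hne : (V k : Set H).Nonempty := ⟨0, (V k).zero_mem⟩
    have hkey : ∀ v ∈ V k, c * ‖d‖ ^ 2 ≤ L * ‖d‖ * dist uinf v := by
      intro v hv
      have hins : u k - v ∈ V k := (V k).sub_mem (hu k) hv
      have h1 : (inner ℝ (A uinf - A (u k)) (u k - v) : ℝ) = 0 := by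
        rw [inner_sub_left, huinfgal _ (hVsub k hins), hugal k _ hins]
        ring
      have h2 : (inner ℝ (A uinf - A (u k)) d : ℝ)
          = (inner ℝ (A uinf - A (u k)) (uinf - v) : ℝ) := by
        have hdd : d = (uinf - v) + (v - u k) := by rw [hd]; abel
        rw [hdd, inner_add_right]
        have h3 : (inner ℝ (A uinf - A (u k)) (v - u k) : ℝ) = 0 := by
          rw [← neg_sub (u k) v, inner_neg_right, h1, neg_zero]
        rw [h3, add_zero]
      calc c * ‖d‖ ^ 2 ≤ (inner ℝ (A uinf - A (u k)) d : ℝ) := hmono uinf (u k)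
        _ = (inner ℝ (A uinf - A (u k)) (uinf - v) : ℝ) := h2
        _ ≤ ‖A uinf - A (u k)‖ * ‖uinf - v‖ := real_inner_le_norm _ _
        _ ≤ (L * ‖d‖) * ‖uinf - v‖ :=
            mul_le_mul_of_nonneg_right (hlip uinf (u k)) (norm_nonneg _)
        _ = L * ‖d‖ * dist uinf v := by rw [dist_eq_norm]
    by_cases hdz : ‖d‖ = 0
    · rw [hdz]
      have := Metric.infDist_nonneg (x := uinf) (s := (V k : Set H))
      positivity
    · have hd0 : 0 < ‖d‖ := lt_of_le_of_ne (norm_nonneg _) (Ne.symm hdz)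
      have hL0 : 0 < L := by
        by_contra hL0
        push_neg at hL0
        rcases hne with ⟨v0, hv0⟩
        have := hkey v0 hv0
        have h0 : L * ‖d‖ * dist uinf v0 ≤ 0 := by
          have : L * ‖d‖ * dist uinf v0 ≤ 0 * ‖d‖ * dist uinf v0 := by
            apply mul_le_mul_of_nonneg_right _ dist_nonneg
            exact mul_le_mul_of_nonneg_right hL0 (norm_nonneg _)
          simpa using this
        have hpos : 0 < c * ‖d‖ ^ 2 := by positivity
        linarith [hkey v0 hv0]
      have hinf : (c / L) * ‖d‖ ≤ Metric.infDist uinf (V k : Set H) := by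
        by_contra hlt
        push_neg at hlt
        rcases (Metric.infDist_lt_iff hne).1 hlt with ⟨v, hv, hvd⟩
        have h := hkey v hv
        have hid : L * ‖d‖ * (c / L * ‖d‖) = c * ‖d‖ ^ 2 := by
          field_simp
        nlinarith [mul_lt_mul_of_pos_left hvd (mul_pos hL0 hd0)]
      calc ‖d‖ = (L / c) * ((c / L) * ‖d‖) := by field_simp
        _ ≤ (L / c) * Metric.infDist uinf (V k : Set H) :=
            mul_le_mul_of_nonneg_left hinf (by positivity)
  refine ⟨hbound, ?_⟩
  have hinf0 : Filter.Tendsto (fun k => Metric.infDist uinf (V k : Set H))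
      Filter.atTop (nhds 0) := by
    rw [Metric.tendsto_atTop]
    intro ε hε
    have hmem : uinf ∈ closure (⋃ k, (V k : Set H)) := hVinf ▸ huinf
    rcases Metric.mem_closure_iff.1 hmem ε hε with ⟨w, hw, hwd⟩
    rcases Set.mem_iUnion.1 hw with ⟨m, hm⟩
    refine ⟨m, fun n hn => ?_⟩
    have hle : Metric.infDist uinf (V n : Set H) ≤ dist uinf w :=
      Metric.infDist_le_dist_of_mem (hV hn hm)
    rw [Real.dist_eq, sub_zero, abs_of_nonneg Metric.infDist_nonneg]
    exact lt_of_le_of_lt hle hwd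
  have hg : Filter.Tendsto (fun k => (L / c) * Metric.infDist uinf (V k : Set H))
      Filter.atTop (nhds 0) := by
    simpa using hinf0.const_mul (L / c)
  exact squeeze_zero (fun k => norm_nonneg _) hbound hg
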